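/- Let X ~ N(μ_n, σ²/N_n) where μ_n < γ for all n, N_n → ∞ with N_n ≤ n, and μ_n → μ < γ. Then P(X > γ) is logarithmically equivalent to exp(−(γ−μ_n)²·N_n/(2σ²)), i.e., lim_{n→∞} (1/n) log( P(X_n > γ) / exp(−(γ−μ_n)²/(2σ²/N_n)) ) = 0. -/

import Mathlib

open Filter Real MeasureTheory ProbabilityTheory
open Set NNReal

lemma intExpTail (c : ℝ) {b : ℝ} (hb : 0 < b) :
    ∫ x in Set.Ioi c, rexp (-(b * (x - c))) = 1 / b := by
  have h1 : ∀ x : ℝ, rexp (-(b * (x - c))) = rexp (b * c) * rexp (-(b * x)) := by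
    intro x; rw [← Real.exp_add]; ring_nf
  simp_rw [h1]
  rw [MeasureTheory.integral_const_mul]
  have h2 := integral_comp_mul_left_Ioi (fun x => rexp (-x)) c hb
  simp only [smul_eq_mul] at h2
  rw [show (fun x => rexp (-(b*x))) = (fun x => rexp (-(b*x))) from rfl]
  have : (∫ x in Set.Ioi c, rexp (-(b * x))) = b⁻¹ * rexp (-(b * c)) := by
    rw [h2, integral_exp_neg_Ioi]
  rw [this, mul_comm (b⁻¹), ← mul_assoc, ← Real.exp_add]
  simp

lemma intExpTail_integrable (c : ℝ) {b : ℝ} (hb : 0 < b) :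
    IntegrableOn (fun x => rexp (-(b * (x - c)))) (Set.Ioi c) := by
  have h1 : ∀ x : ℝ, rexp (-(b * (x - c))) = rexp (b * c) * rexp (-(b * x)) := by
    intro x; rw [← Real.exp_add]; ring_nf
  have h2 : IntegrableOn (fun x => rexp (b * c) * rexp (-(b * x))) (Set.Ioi c) := by
    have := (exp_neg_integrableOn_Ioi c hb).const_mul (rexp (b * c))
    simpa [IntegrableOn] using this
  exact h2.congr_fun (fun x _ => (h1 x).symm) measurableSet_Ioi

lemma gauss_tail_bounds (m c : ℝ) (v : ℝ≥0) (hv : 0 < (v : ℝ)) (hm : m < c) :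
    rexp (-(c - m) ^ 2 / (2 * (v : ℝ))) *
        (rexp (-((c - m) / Real.sqrt v) - 1/2) / Real.sqrt (2 * π)) ≤
      ((gaussianReal m v) (Set.Ioi c)).toReal ∧
    ((gaussianReal m v) (Set.Ioi c)).toReal ≤
      rexp (-(c - m) ^ 2 / (2 * (v : ℝ))) * (Real.sqrt v / ((c - m) * Real.sqrt (2 * π))) := by
  have hvne : v ≠ 0 := by
    intro h; rw [h] at hv; simp at hv
  set a : ℝ := c - m with ha_def
  have ha : 0 < a := by simp [ha_def]; linarith
  set s : ℝ := Real.sqrt v with hs_def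
  have hs : 0 < s := Real.sqrt_pos.mpr hv
  have hss : s * s = (v : ℝ) := Real.mul_self_sqrt hv.le
  have hpi : 0 < Real.sqrt (2 * π) := Real.sqrt_pos.mpr (by positivity)
  have hsplit : Real.sqrt (2 * π * v) = Real.sqrt (2 * π) * s := by
    rw [hs_def, ← Real.sqrt_mul (by positivity)]
  have hP : ((gaussianReal m v) (Set.Ioi c)).toReal
      = ∫ x in Set.Ioi c, gaussianPDFReal m v x := by
    rw [gaussianReal_apply_eq_integral m hvne, ENNReal.toReal_ofReal]
    exact setIntegral_nonneg measurableSet_Ioi fun x _ => gaussianPDFReal_nonneg m v x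
  constructor
  · -- lower bound
    have hmono : (gaussianReal m v) (Set.Ioc c (c + s)) ≤ (gaussianReal m v) (Set.Ioi c) :=
      measure_mono Set.Ioc_subset_Ioi_self
    have hfin : (gaussianReal m v) (Set.Ioi c) ≠ ⊤ := measure_ne_top _ _
    have hQ : ((gaussianReal m v) (Set.Ioc c (c + s))).toReal
        = ∫ x in Set.Ioc c (c + s), gaussianPDFReal m v x := by
      rw [gaussianReal_apply_eq_integral m hvne, ENNReal.toReal_ofReal]
      exact setIntegral_nonneg measurableSet_Ioc fun x _ => gaussianPDFReal_nonneg m v x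
    have step1 : ((gaussianReal m v) (Set.Ioc c (c + s))).toReal
        ≤ ((gaussianReal m v) (Set.Ioi c)).toReal :=
      ENNReal.toReal_mono hfin hmono
    have hconst : ∀ x ∈ Set.Ioc c (c + s),
        (Real.sqrt (2 * π * v))⁻¹ * rexp (-(a + s) ^ 2 / (2 * (v : ℝ)))
          ≤ gaussianPDFReal m v x := by
      intro x hx
      rw [gaussianPDFReal]
      refine mul_le_mul_of_nonneg_left ?_ (by positivity)
      apply Real.exp_le_exp.mpr
      have hx1 : c < x := hx.1
      have hx2 : x ≤ c + s := hx.2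
      have h2 : (x - m) ^ 2 ≤ (a + s) ^ 2 := by nlinarith
      rw [div_le_div_iff₀ (by positivity) (by positivity)]
      nlinarith [mul_nonneg (sub_nonneg.mpr h2) hv.le]
    have step2 : (Real.sqrt (2 * π * v))⁻¹ * rexp (-(a + s) ^ 2 / (2 * (v : ℝ))) * s
        ≤ ∫ x in Set.Ioc c (c + s), gaussianPDFReal m v x := by
      have := setIntegral_mono_on (integrableOn_const measure_Ioc_lt_top.ne)
        ((integrable_gaussianPDFReal m v).integrableOn) measurableSet_Ioc hconst
      calc (Real.sqrt (2 * π * v))⁻¹ * rexp (-(a + s) ^ 2 / (2 * (v : ℝ))) * s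
          = ∫ _x in Set.Ioc c (c + s),
              (Real.sqrt (2 * π * v))⁻¹ * rexp (-(a + s) ^ 2 / (2 * (v : ℝ))) := by
            rw [setIntegral_const, measureReal_def, Real.volume_Ioc, smul_eq_mul]
            rw [ENNReal.toReal_ofReal (by linarith)]
            ring
        _ ≤ _ := this
    have key : (Real.sqrt (2 * π * v))⁻¹ * rexp (-(a + s) ^ 2 / (2 * (v : ℝ))) * s
        = rexp (-a ^ 2 / (2 * (v : ℝ))) * (rexp (-(a / s) - 1/2) / Real.sqrt (2 * π)) := by
      have hexp : -(a + s) ^ 2 / (2 * (v : ℝ)) = -a ^ 2 / (2 * (v : ℝ)) + (-(a / s) - 1/2) := by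
        rw [← hss]; field_simp; ring
      rw [hexp, Real.exp_add, hsplit]
      field_simp
    rw [hP, ← key]
    calc (Real.sqrt (2 * π * (v : ℝ)))⁻¹ * rexp (-(a + s) ^ 2 / (2 * (v : ℝ))) * s
        ≤ ∫ x in Set.Ioc c (c + s), gaussianPDFReal m v x := step2
      _ = ((gaussianReal m v) (Set.Ioc c (c + s))).toReal := hQ.symm
      _ ≤ ((gaussianReal m v) (Set.Ioi c)).toReal := step1
      _ = ∫ x in Set.Ioi c, gaussianPDFReal m v x := hP
  · -- upper bound
    have hb : 0 < a / (v : ℝ) := by positivity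
    have hptwise : ∀ x ∈ Set.Ioi c, gaussianPDFReal m v x
        ≤ (Real.sqrt (2 * π * (v : ℝ)))⁻¹ * rexp (-a ^ 2 / (2 * (v : ℝ)))
            * rexp (-(a / (v : ℝ) * (x - c))) := by
      intro x hx
      have hx1 : c < x := hx
      have harg : -(x - m) ^ 2 / (2 * (v : ℝ))
          ≤ -a ^ 2 / (2 * (v : ℝ)) + -(a / (v : ℝ) * (x - c)) := by
        have e1 : -a ^ 2 / (2 * (v : ℝ)) + -(a / (v : ℝ) * (x - c))
            = (-a ^ 2 - 2 * a * (x - c)) / (2 * (v : ℝ)) := by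
          field_simp
          ring
        have key2 : -(x - m) ^ 2 = (-a ^ 2 - 2 * a * (x - c)) - (x - c) ^ 2 := by
          rw [ha_def]; ring
        rw [e1, div_le_div_iff₀ (by positivity) (by positivity), key2]
        nlinarith [mul_nonneg (sq_nonneg (x - c)) hv.le]
      calc gaussianPDFReal m v x
          = (Real.sqrt (2 * π * (v : ℝ)))⁻¹ * rexp (-(x - m) ^ 2 / (2 * (v : ℝ))) := rfl
        _ ≤ (Real.sqrt (2 * π * (v : ℝ)))⁻¹ *
              (rexp (-a ^ 2 / (2 * (v : ℝ))) * rexp (-(a / (v : ℝ) * (x - c)))) := by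
            rw [← Real.exp_add]
            exact mul_le_mul_of_nonneg_left (Real.exp_le_exp.mpr harg) (by positivity)
        _ = _ := by ring
    have hint : IntegrableOn (fun x => (Real.sqrt (2 * π * (v : ℝ)))⁻¹
        * rexp (-a ^ 2 / (2 * (v : ℝ))) * rexp (-(a / (v : ℝ) * (x - c)))) (Set.Ioi c) :=
      (intExpTail_integrable c hb).const_mul _
    have hle := setIntegral_mono_on ((integrable_gaussianPDFReal m v).integrableOn)
      hint measurableSet_Ioi hptwise
    have hval : ∫ x in Set.Ioi c, (Real.sqrt (2 * π * (v : ℝ)))⁻¹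
        * rexp (-a ^ 2 / (2 * (v : ℝ))) * rexp (-(a / (v : ℝ) * (x - c)))
        = rexp (-a ^ 2 / (2 * (v : ℝ))) * (s / (a * Real.sqrt (2 * π))) := by
      rw [MeasureTheory.integral_const_mul, intExpTail c hb, one_div_div, hsplit]
      rw [mul_comm ((Real.sqrt (2 * π) * s)⁻¹), mul_assoc]
      congr 1
      rw [mul_inv, ← hss]
      field_simp
    rw [hP]
    calc (∫ x in Set.Ioi c, gaussianPDFReal m v x) ≤ _ := hle
      _ = rexp (-a ^ 2 / (2 * (v : ℝ))) * (s / (a * Real.sqrt (2 * π))) := hval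

lemma ratio_log_bounds (m c : ℝ) (v : ℝ≥0) (hv : 0 < (v : ℝ)) (hm : m < c) :
    (-((c - m) / Real.sqrt v) - (1/2 + Real.log (Real.sqrt (2 * π)))) ≤
      Real.log (((gaussianReal m v) (Set.Ioi c)).toReal /
        rexp (-(c - m) ^ 2 / (2 * (v : ℝ)))) ∧
    Real.log (((gaussianReal m v) (Set.Ioi c)).toReal /
        rexp (-(c - m) ^ 2 / (2 * (v : ℝ)))) ≤
      Real.log (Real.sqrt v / ((c - m) * Real.sqrt (2 * π))) := by
  obtain ⟨hl, hu⟩ := gauss_tail_bounds m c v hv hm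
  have hpi : 0 < Real.sqrt (2 * π) := Real.sqrt_pos.mpr (by positivity)
  have hs : 0 < Real.sqrt v := Real.sqrt_pos.mpr hv
  have ha : 0 < c - m := by linarith
  set E : ℝ := rexp (-(c - m) ^ 2 / (2 * (v : ℝ))) with hE_def
  have hE : 0 < E := Real.exp_pos _
  set C1 : ℝ := rexp (-((c - m) / Real.sqrt v) - 1/2) / Real.sqrt (2 * π) with hC1_def
  set C2 : ℝ := Real.sqrt v / ((c - m) * Real.sqrt (2 * π)) with hC2_def
  have hC1 : 0 < C1 := by rw [hC1_def]; positivity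
  have hC2 : 0 < C2 := by rw [hC2_def]; positivity
  have hP : 0 < ((gaussianReal m v) (Set.Ioi c)).toReal := lt_of_lt_of_le (by positivity) hl
  have hlogdiv : Real.log (((gaussianReal m v) (Set.Ioi c)).toReal / E)
      = Real.log (((gaussianReal m v) (Set.Ioi c)).toReal) - Real.log E :=
    Real.log_div hP.ne' hE.ne'
  constructor
  · have h1 : Real.log (E * C1) ≤ Real.log (((gaussianReal m v) (Set.Ioi c)).toReal) :=
      Real.log_le_log (by positivity) hl
    rw [Real.log_mul hE.ne' hC1.ne', hC1_def, Real.log_div (Real.exp_ne_zero _) hpi.ne'] at h1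
    simp only [hE_def, Real.log_exp] at h1
    rw [hlogdiv]
    simp only [hE_def, Real.log_exp]
    linarith
  · have h1 : Real.log (((gaussianReal m v) (Set.Ioi c)).toReal) ≤ Real.log (E * C2) :=
      Real.log_le_log hP hu
    rw [Real.log_mul hE.ne' hC2.ne'] at h1
    simp only [hE_def, Real.log_exp] at h1
    rw [hlogdiv]
    simp only [hE_def, Real.log_exp]
    linarith


theorem gaussian_tail_logEquiv (γ σ μinf : ℝ) (hσ : 0 < σ) (μ : ℕ → ℝ) (N : ℕ → ℕ)
    (hμγ : ∀ n, μ n < γ) (hμ : Tendsto μ atTop (nhds μinf)) (hμinf : μinf < γ)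
    (hN : Tendsto N atTop atTop) (hNn : ∀ n, N n ≤ n) :
    Tendsto (fun n : ℕ => (1 / (n : ℝ)) *
      Real.log (((gaussianReal (μ n) ((σ ^ 2 / (N n : ℝ)).toNNReal)) (Set.Ioi γ)).toReal /
        Real.exp (-(γ - μ n) ^ 2 / (2 * σ ^ 2 / (N n : ℝ))))) atTop (nhds 0) := by
  have hpi : 0 < Real.sqrt (2 * π) := Real.sqrt_pos.mpr (by positivity)
  set a0 : ℝ := (γ - μinf) / 2 with ha0_def
  have ha0 : 0 < a0 := by rw [ha0_def]; linarith
  set A : ℝ := γ - μinf + 1 with hA_def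
  have hA : 0 < A := by rw [hA_def]; linarith
  set K : ℝ := |1/2 + Real.log (Real.sqrt (2 * π))| +
    |Real.log (σ / (a0 * Real.sqrt (2 * π)))| with hK_def
  have hK0 : 0 ≤ K := by positivity
  have hsqinv : Tendsto (fun n : ℕ => (A / σ) * Real.sqrt (1 / (n : ℝ))) atTop (nhds 0) := by
    have h1 : Tendsto (fun n : ℕ => Real.sqrt (1 / (n : ℝ))) atTop (nhds 0) := by
      have h0 := (Real.continuous_sqrt.tendsto 0).comp (tendsto_one_div_atTop_nhds_zero_nat)
      rw [Real.sqrt_zero] at h0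
      exact h0
    simpa using h1.const_mul (A / σ)
  have hKdiv : Tendsto (fun n : ℕ => K / (n : ℝ)) atTop (nhds 0) :=
    tendsto_const_div_atTop_nhds_zero_nat K
  have hlow_tend : Tendsto
      (fun n : ℕ => -((A / σ) * Real.sqrt (1 / (n : ℝ))) - K / (n : ℝ)) atTop (nhds 0) := by
    have := (hsqinv.neg).sub hKdiv
    simpa using this
  refine tendsto_of_tendsto_of_tendsto_of_le_of_le' hlow_tend hKdiv ?_ ?_
  · -- lower bound eventually
    filter_upwards [hμ (Ioo_mem_nhds (show μinf - 1 < μinf by linarith)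
        (show μinf < (μinf + γ) / 2 by linarith)), hN.eventually_ge_atTop 1,
        eventually_ge_atTop 1] with n h1 h2 h3
    set v : ℝ≥0 := (σ ^ 2 / (N n : ℝ)).toNNReal with hv_def
    have hN1 : (1 : ℝ) ≤ (N n : ℝ) := by exact_mod_cast h2
    have hNpos : (0 : ℝ) < (N n : ℝ) := by linarith
    have hvc : (v : ℝ) = σ ^ 2 / (N n : ℝ) := Real.coe_toNNReal _ (by positivity)
    have hv : 0 < (v : ℝ) := by rw [hvc]; positivity
    have harg : -(γ - μ n) ^ 2 / (2 * σ ^ 2 / (N n : ℝ)) = -(γ - μ n) ^ 2 / (2 * (v : ℝ)) := by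
      rw [hvc]; ring
    have haA : γ - μ n ≤ A := by rw [hA_def]; linarith [h1.1]
    have ha0a : a0 ≤ γ - μ n := by rw [ha0_def]; linarith [h1.2]
    have hsv : Real.sqrt v = σ / Real.sqrt (N n) := by
      rw [hvc, show σ ^ 2 / (N n : ℝ) = (σ / Real.sqrt (N n)) ^ 2 by
        rw [div_pow, Real.sq_sqrt hNpos.le], Real.sqrt_sq (by positivity)]
    have hsN : 0 < Real.sqrt (N n : ℝ) := Real.sqrt_pos.mpr hNpos
    have hn1 : (1 : ℝ) ≤ (n : ℝ) := by exact_mod_cast h3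
    have hsn : 0 < Real.sqrt (n : ℝ) := Real.sqrt_pos.mpr (by linarith)
    obtain ⟨hlo, hup⟩ := ratio_log_bounds (μ n) γ v hv (hμγ n)
    rw [harg]
    have hq : (γ - μ n) / Real.sqrt v ≤ A * Real.sqrt n / σ := by
      rw [hsv, div_div_eq_mul_div]
      gcongr
      exact_mod_cast hNn n
    have hKk : 1/2 + Real.log (Real.sqrt (2 * π)) ≤ K := by
      rw [hK_def]
      have h5 := le_abs_self (1/2 + Real.log (Real.sqrt (2 * π)))
      have h6 := abs_nonneg (Real.log (σ / (a0 * Real.sqrt (2 * π))))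
      linarith
    have hlow2 : -(A * Real.sqrt n / σ) - K ≤
        Real.log (((gaussianReal (μ n) v) (Set.Ioi γ)).toReal /
          rexp (-(γ - μ n) ^ 2 / (2 * (v : ℝ)))) := by linarith
    have hEq : -((A / σ) * Real.sqrt (1 / (n : ℝ))) - K / (n : ℝ)
        = (1 / (n : ℝ)) * (-(A * Real.sqrt n / σ) - K) := by
      have e2 : (1 / (n : ℝ)) * (A * Real.sqrt n / σ) = (A / σ) * (Real.sqrt (n : ℝ))⁻¹ := by
        rw [← Real.sqrt_div_self]
        field_simp
      rw [one_div ((n : ℝ)), Real.sqrt_inv, ← one_div ((n : ℝ))]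
      calc -((A / σ) * (Real.sqrt (n : ℝ))⁻¹) - K / (n : ℝ)
          = -((1 / (n : ℝ)) * (A * Real.sqrt n / σ)) - (1 / (n : ℝ)) * K := by rw [e2]; ring
        _ = (1 / (n : ℝ)) * (-(A * Real.sqrt n / σ) - K) := by ring
    rw [hEq]
    exact mul_le_mul_of_nonneg_left hlow2 (by positivity)
  · filter_upwards [hμ (Ioo_mem_nhds (show μinf - 1 < μinf by linarith)
        (show μinf < (μinf + γ) / 2 by linarith)), hN.eventually_ge_atTop 1,
        eventually_ge_atTop 1] with n h1 h2 h3
    set v : ℝ≥0 := (σ ^ 2 / (N n : ℝ)).toNNReal with hv_def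
    have hN1 : (1 : ℝ) ≤ (N n : ℝ) := by exact_mod_cast h2
    have hNpos : (0 : ℝ) < (N n : ℝ) := by linarith
    have hvc : (v : ℝ) = σ ^ 2 / (N n : ℝ) := Real.coe_toNNReal _ (by positivity)
    have hv : 0 < (v : ℝ) := by rw [hvc]; positivity
    have harg : -(γ - μ n) ^ 2 / (2 * σ ^ 2 / (N n : ℝ)) = -(γ - μ n) ^ 2 / (2 * (v : ℝ)) := by
      rw [hvc]; ring
    have haA : γ - μ n ≤ A := by rw [hA_def]; linarith [h1.1]
    have ha0a : a0 ≤ γ - μ n := by rw [ha0_def]; linarith [h1.2]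
    have hsv : Real.sqrt v = σ / Real.sqrt (N n) := by
      rw [hvc, show σ ^ 2 / (N n : ℝ) = (σ / Real.sqrt (N n)) ^ 2 by
        rw [div_pow, Real.sq_sqrt hNpos.le], Real.sqrt_sq (by positivity)]
    have hsN : 0 < Real.sqrt (N n : ℝ) := Real.sqrt_pos.mpr hNpos
    have hn1 : (1 : ℝ) ≤ (n : ℝ) := by exact_mod_cast h3
    have hsn : 0 < Real.sqrt (n : ℝ) := Real.sqrt_pos.mpr (by linarith)
    obtain ⟨hlo, hup⟩ := ratio_log_bounds (μ n) γ v hv (hμγ n)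
    rw [harg]
    have h1N : (1 : ℝ) ≤ Real.sqrt (N n) := by
      calc (1:ℝ) = Real.sqrt 1 := Real.sqrt_one.symm
        _ ≤ Real.sqrt (N n) := Real.sqrt_le_sqrt hN1
    have hsle : Real.sqrt v ≤ σ := by
      rw [hsv]
      exact div_le_self hσ.le h1N
    have hC2le : Real.sqrt v / ((γ - μ n) * Real.sqrt (2 * π)) ≤ σ / (a0 * Real.sqrt (2 * π)) :=
      div_le_div₀ hσ.le hsle (by positivity) (mul_le_mul_of_nonneg_right ha0a hpi.le)
    have hlog2 : Real.log (Real.sqrt v / ((γ - μ n) * Real.sqrt (2 * π))) ≤ K := by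
      have hstep : Real.log (Real.sqrt v / ((γ - μ n) * Real.sqrt (2 * π)))
          ≤ Real.log (σ / (a0 * Real.sqrt (2 * π))) := by
        have hga : 0 < γ - μ n := by linarith [hμγ n]
        exact Real.log_le_log (div_pos (Real.sqrt_pos.mpr hv) (mul_pos hga hpi)) hC2le
      have h5 := le_abs_self (Real.log (σ / (a0 * Real.sqrt (2 * π))))
      have h6 := abs_nonneg (1/2 + Real.log (Real.sqrt (2 * π)))
      rw [hK_def]
      linarith
    calc (1 / (n : ℝ)) * Real.log (((gaussianReal (μ n) v) (Set.Ioi γ)).toReal /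
          rexp (-(γ - μ n) ^ 2 / (2 * (v : ℝ))))
        ≤ (1 / (n : ℝ)) * K :=
          mul_le_mul_of_nonneg_left (le_trans hup hlog2) (by positivity)
      _ = K / (n : ℝ) := by ring
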